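/- Let (R, m) be a Noetherian local ring with embedding dimension n ≥ 2, and let I be an m-primary ideal contained in m² such that R/I is Gorenstein. Set L = I : m. Then I·m = L·m. -/

import Mathlib

universe u

/-- An ideal is irreducible if it is proper and is not the intersection of two
ideals properly containing it. -/
def Ideal.IsIrreducibleIdeal {R : Type*} [CommRing R] (I : Ideal R) : Prop :=
  I ≠ ⊤ ∧ ∀ J K : Ideal R, I = J ⊓ K → I = J ∨ I = K

/-- **Lemma.** Let `(R, m)` be a Noetherian local ring of embedding dimension at least two
(i.e. `m` is not principal) and let `I ⊆ m²` be an `m`-primary ideal with `R ⧸ I`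
Gorenstein (equivalently, `I` irreducible). Then `I m = L m` where `L = I : m`. -/
theorem socle_ideal_times_maximalIdeal
    {R : Type*} [CommRing R] [IsLocalRing R] [IsNoetherianRing R]
    (hembdim : ∀ a : R, Ideal.span {a} ≠ IsLocalRing.maximalIdeal R)
    (I : Ideal R) (hI2 : I ≤ IsLocalRing.maximalIdeal R ^ 2)
    (hprim : I.radical = IsLocalRing.maximalIdeal R)
    (hgor : I.IsIrreducibleIdeal)
    (L : Ideal R) (hL : L = Submodule.colon I (IsLocalRing.maximalIdeal R)) :
    I * IsLocalRing.maximalIdeal R = L * IsLocalRing.maximalIdeal R := by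
  subst hL
  classical
  set m : Ideal R := IsLocalRing.maximalIdeal R with hm
  -- basic facts
  have hmfg : m.FG := IsNoetherian.noetherian m
  have hjac : m ≤ Ideal.jacobson ⊥ := by
    rw [IsLocalRing.jacobson_eq_maximalIdeal ⊥ bot_ne_top]
  have hnak : ∀ N : Ideal R, m ≤ N ⊔ m * m → m ≤ N := by
    intro N h
    exact Submodule.le_of_le_smul_of_le_jacobson_bot hmfg hjac
      (by rwa [Ideal.smul_eq_mul])
  have hmm : I ≤ m * m := by rw [← pow_two]; exact hI2
  have hmne : m ≠ ⊥ := by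
    intro h
    exact hembdim 0 (by rw [h, Ideal.span_singleton_eq_bot])
  have hLle : Submodule.colon I m ≤ m := by
    apply IsLocalRing.le_maximalIdeal
    intro htop
    have h1 : (1:R) ∈ Submodule.colon I m := by rw [htop]; trivial
    have hmI : m ≤ I := by
      intro t ht
      simpa using Submodule.mem_colon.mp h1 t ht
    have hb : m ≤ (⊥ : Ideal R) ⊔ m * m := le_trans (le_trans hmI hmm) le_sup_right
    exact hmne (le_bot_iff.mp (hnak ⊥ hb))
  -- one inclusion is easy
  apply le_antisymm
  · apply Ideal.mul_mono_left
    intro a ha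
    exact Submodule.mem_colon.mpr fun p hp => by
      rw [smul_eq_mul]; exact Ideal.mul_mem_right p I ha
  -- main direction
  rw [Ideal.mul_le]
  intro x hx y hy
  by_contra hxy
  have hxmul : ∀ t ∈ m, x * t ∈ I := by
    intro t ht
    simpa using Submodule.mem_colon.mp hx t ht
  have hxm : x ∈ m := hLle hx
  have hxI : x ∉ I := fun h => hxy (Ideal.mul_mem_mul h hy)
  have hyI : y ∉ I := fun h => hxy (mul_comm y x ▸ Ideal.mul_mem_mul h hxm)
  have hxyI : x * y ∈ I := hxmul y hy
  -- choose J maximal with I*m ≤ J and x*y ∉ J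
  obtain ⟨J, ⟨hJIm, hJxy⟩, hJmax⟩ :=
    (IsNoetherian.wf (inferInstanceAs (IsNoetherian R R))).has_min
      {J : Ideal R | I * m ≤ J ∧ x * y ∉ J} ⟨I * m, le_rfl, hxy⟩
  -- I ≤ J ⊔ (x*y)
  have hIle : I ≤ J ⊔ Ideal.span {x * y} := by
    intro g hg
    by_cases hgJ : g ∈ J
    · exact Submodule.mem_sup_left hgJ
    · have hlt : J < J ⊔ Ideal.span {g} :=
        lt_of_le_of_ne le_sup_left fun h =>
          hgJ (h ▸ Submodule.mem_sup_right (Ideal.mem_span_singleton_self g))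
      have hxyK : x * y ∈ J ⊔ Ideal.span {g} := by
        by_contra hno
        exact hJmax _ ⟨hJIm.trans le_sup_left, hno⟩ hlt
      obtain ⟨j, hj, z, hz, hsum⟩ := Submodule.mem_sup.mp hxyK
      obtain ⟨r, hr⟩ := Ideal.mem_span_singleton'.mp hz
      by_cases hrm : r ∈ m
      · exfalso
        apply hJxy
        have h1 : r * g ∈ I * m := mul_comm g r ▸ Ideal.mul_mem_mul hg hrm
        rw [← hsum, ← hr]
        exact J.add_mem hj (hJIm h1)
      · have hu : IsUnit r := by
          by_contra h
          exact hrm (IsLocalRing.mem_maximalIdeal r |>.mpr (mem_nonunits_iff.mpr h))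
        obtain ⟨u, hu⟩ := hu
        have hz' : (u : R) * g = x * y - j := by
          rw [hu, hr]; exact eq_sub_of_add_eq' hsum
        have hg' : g = (↑u⁻¹ : R) * (x * y) - ↑u⁻¹ * j := by
          have := congrArg (fun t => (↑u⁻¹ : R) * t) hz'
          simpa [Units.inv_mul_cancel_left, mul_sub] using this
        rw [hg']
        exact Submodule.sub_mem _
          (Submodule.mem_sup_right (Ideal.mul_mem_left _ _ (Ideal.mem_span_singleton_self _)))
          (Submodule.mem_sup_left (Ideal.mul_mem_left J _ hj))
  -- J : y = I
  have hIJy : I ≤ Submodule.colon J (Ideal.span {y}) := by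
    intro g hg
    exact Ideal.mem_colon_span_singleton.mpr (hJIm (Ideal.mul_mem_mul hg hy))
  have hxJy : x ∉ Submodule.colon J (Ideal.span {y}) := fun h =>
    hJxy (Ideal.mem_colon_span_singleton.mp h)
  have hinf : I = Submodule.colon J (Ideal.span {y}) ⊓ (I ⊔ Ideal.span {x}) := by
    apply le_antisymm (le_inf hIJy le_sup_left)
    rintro z ⟨hz1, hz2⟩
    obtain ⟨i, hi, w, hw, hsum⟩ := Submodule.mem_sup.mp hz2
    obtain ⟨r, hr⟩ := Ideal.mem_span_singleton'.mp hw
    by_cases hrm : r ∈ m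
    · have h1 : r * x ∈ I := mul_comm x r ▸ hxmul r hrm
      rw [← hsum, ← hr]
      exact I.add_mem hi h1
    · exfalso
      apply hxJy
      have hu : IsUnit r := by
        by_contra h
        exact hrm (IsLocalRing.mem_maximalIdeal r |>.mpr (mem_nonunits_iff.mpr h))
      obtain ⟨u, hu⟩ := hu
      have hz' : (u : R) * x = z - i := by
        rw [hu, hr]; exact eq_sub_of_add_eq' hsum
      have hx' : x = (↑u⁻¹ : R) * z - ↑u⁻¹ * i := by
        have := congrArg (fun t => (↑u⁻¹ : R) * t) hz'
        simpa [Units.inv_mul_cancel_left, mul_sub] using this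
      rw [hx']
      exact Submodule.sub_mem _ (Ideal.mul_mem_left _ _ hz1)
        (Ideal.mul_mem_left _ _ (hIJy hi))
  have hJyI : Submodule.colon J (Ideal.span {y}) = I := by
    rcases hgor.2 _ _ hinf with h | h
    · exact h.symm
    · exfalso
      exact hxI (h ▸ Submodule.mem_sup_right (Ideal.mem_span_singleton_self x))
  -- I : y ≤ I ⊔ (x)
  have hcolon : ∀ w : R, w * y ∈ I → w ∈ I ⊔ Ideal.span {x} := by
    intro w hw
    have hw' : w * y ∈ J ⊔ Ideal.span {x * y} := hIle hw
    obtain ⟨j, hj, z, hz, hsum⟩ := Submodule.mem_sup.mp hw'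
    obtain ⟨r, hr⟩ := Ideal.mem_span_singleton'.mp hz
    by_cases hrm : r ∈ m
    · have h1 : r * (x * y) ∈ J := by
        have h2 : (x * r) * y ∈ I * m := Ideal.mul_mem_mul (hxmul r hrm) hy
        have h3 : r * (x * y) = (x * r) * y := by ring
        rw [h3]
        exact hJIm h2
      have h4 : w * y ∈ J := by
        rw [← hsum, ← hr]
        exact J.add_mem hj h1
      have h5 : w ∈ Submodule.colon J (Ideal.span {y}) := Ideal.mem_colon_span_singleton.mpr h4
      rw [hJyI] at h5
      exact Submodule.mem_sup_left h5
    · -- r is a unit : (w - r*x) * y = j ∈ J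
      have h1 : (w - r * x) * y = j := by
        linear_combination -hsum - hr
      have h4 : w - r * x ∈ Submodule.colon J (Ideal.span {y}) :=
        Ideal.mem_colon_span_singleton.mpr (h1 ▸ hj)
      rw [hJyI] at h4
      have h5 : w = (w - r * x) + r * x := by ring
      rw [h5]
      exact Submodule.add_mem _ (Submodule.mem_sup_left h4)
        (Submodule.mem_sup_right (Ideal.mul_mem_left _ _ (Ideal.mem_span_singleton_self x)))
  -- e := minimal exponent with y^e ∈ I
  have hex : ∃ n, y ^ n ∈ I := by
    obtain ⟨n, hn⟩ := Ideal.exists_radical_pow_le_of_fg I (by rw [hprim]; exact hmfg)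
    exact ⟨n, hn (by rw [hprim]; exact Ideal.pow_mem_pow hy n)⟩
  set e := Nat.find hex with he
  have heI : y ^ e ∈ I := Nat.find_spec hex
  have hITop : I ≠ ⊤ := hgor.1
  have he1 : 1 ≤ e := by
    rcases Nat.eq_zero_or_pos e with h | h
    · exfalso; apply hITop
      rw [h, pow_zero] at heI
      exact Ideal.eq_top_of_isUnit_mem I heI isUnit_one
    · exact h
  have he2 : 2 ≤ e := by
    by_contra h
    have : e = 1 := by omega
    rw [this, pow_one] at heI
    exact hyI heI
  -- y^(e-1) = i₀ + c*x with c a unit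
  have hstep : y ^ (e - 1) * y ∈ I := by
    rw [← pow_succ, Nat.sub_add_cancel he1]; exact heI
  obtain ⟨i₀, hi₀, z₀, hz₀, hsum₀⟩ := Submodule.mem_sup.mp (hcolon _ hstep)
  obtain ⟨c, hc⟩ := Ideal.mem_span_singleton'.mp hz₀
  have hcu : IsUnit c := by
    by_contra hcm
    have hcmem : c ∈ m := IsLocalRing.mem_maximalIdeal c |>.mpr (mem_nonunits_iff.mpr hcm)
    have : y ^ (e - 1) ∈ I := by
      rw [← hsum₀, ← hc]
      exact I.add_mem hi₀ (mul_comm x c ▸ hxmul c hcmem)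
    exact Nat.find_min hex (by omega : e - 1 < e) this
  obtain ⟨u, hu⟩ := hcu
  have hxval : (u : R) * x = y ^ (e - 1) - i₀ := by
    rw [hu, hc]; exact eq_sub_of_add_eq' hsum₀
  -- descending induction
  have base : ∀ t ∈ m, ∃ r : R, (t - r * y) * y ^ (e - 1) ∈ I := by
    intro t ht
    refine ⟨0, ?_⟩
    rw [zero_mul, sub_zero, ← hsum₀, ← hc]
    have h1 : t * (i₀ + c * x) = t * i₀ + c * (x * t) := by ring
    rw [h1]
    exact I.add_mem (I.mul_mem_left t hi₀) (I.mul_mem_left c (hxmul t ht))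
  have step : ∀ j : ℕ, j + 1 ≤ e - 1 →
      (∀ t ∈ m, ∃ r : R, (t - r * y) * y ^ (j + 1) ∈ I) →
      (∀ t ∈ m, ∃ r : R, (t - r * y) * y ^ j ∈ I) := by
    intro j hj ih t ht
    obtain ⟨r, hr⟩ := ih t ht
    have h1 : ((t - r * y) * y ^ j) * y ∈ I := by
      rw [mul_assoc, ← pow_succ]; exact hr
    obtain ⟨i₁, hi₁, z₁, hz₁, hsum₁⟩ := Submodule.mem_sup.mp (hcolon _ h1)
    obtain ⟨d, hd⟩ := Ideal.mem_span_singleton'.mp hz₁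
    refine ⟨r + d * ↑u⁻¹ * y ^ (e - 1 - j - 1), ?_⟩
    have hpow : y ^ (e - 1 - j - 1) * y * y ^ j = y ^ (e - 1) := by
      rw [mul_assoc, ← pow_succ']
      rw [← pow_add]
      congr 1
      omega
    have hux : x = (↑u⁻¹ : R) * (y ^ (e - 1) - i₀) := by
      have := congrArg (fun t => (↑u⁻¹ : R) * t) hxval
      simpa [Units.inv_mul_cancel_left] using this
    have hval : (t - r * y) * y ^ j = i₁ + d * x := by
      rw [← hsum₁, ← hd]
    have key : (t - (r + d * ↑u⁻¹ * y ^ (e - 1 - j - 1)) * y) * y ^ j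
        = i₁ - d * ↑u⁻¹ * i₀ := by
      have expand : (t - (r + d * ↑u⁻¹ * y ^ (e - 1 - j - 1)) * y) * y ^ j
          = (t - r * y) * y ^ j - d * ↑u⁻¹ * (y ^ (e - 1 - j - 1) * y * y ^ j) := by
        ring
      rw [expand, hpow, hval, hux]
      ring
    rw [key]
    exact Submodule.sub_mem _ hi₁ (I.mul_mem_left _ hi₀)
  have descend : ∀ i : ℕ, i ≤ e - 1 → ∀ t ∈ m, ∃ r : R, (t - r * y) * y ^ (e - 1 - i) ∈ I := by
    intro i
    induction i with
    | zero => intro _; simpa using base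
    | succ k ih =>
      intro hk t ht
      have hk' : k ≤ e - 1 := by omega
      have hj : (e - 1 - (k + 1)) + 1 ≤ e - 1 := by omega
      have heq : e - 1 - (k + 1) + 1 = e - 1 - k := by omega
      refine step _ hj ?_ t ht
      intro t' ht'
      obtain ⟨r, hr⟩ := ih hk' t' ht'
      exact ⟨r, by rw [heq]; exact hr⟩
  have hyp0 : ∀ t ∈ m, ∃ r : R, t - r * y ∈ I := by
    intro t ht
    obtain ⟨r, hr⟩ := descend (e - 1) le_rfl t ht
    rw [Nat.sub_self, pow_zero, mul_one] at hr
    exact ⟨r, hr⟩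
  have hmle : m ≤ Ideal.span {y} ⊔ m * m := by
    intro t ht
    obtain ⟨r, hr⟩ := hyp0 t ht
    have h1 : t = r * y + (t - r * y) := by ring
    rw [h1]
    exact Submodule.add_mem _
      (Submodule.mem_sup_left (Ideal.mem_span_singleton'.mpr ⟨r, rfl⟩))
      (Submodule.mem_sup_right (hmm hr))
  have hfin : m ≤ Ideal.span {y} := hnak _ hmle
  have hspan : Ideal.span {y} = m :=
    le_antisymm (by rw [Ideal.span_le]; exact Set.singleton_subset_iff.mpr hy) hfin
  exact hembdim y hspan
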